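/- For the language L = (ab)* over {a,b} and the word w = b^n a^n: every jump sequence ā with w_ā ∈ L has a_i ∈ {n+1,...,2n} for odd i ≤ 2n and a_i ∈ {1,...,n} for even i ≤ 2n, and consequently every index 1 ≤ i ≤ 2n is a turning index of ā. Hence the minimal number of turning indices over accepting jump sequences is exactly 2n. -/
import Mathlib


open scoped Classical

/-- A jump sequence for a word of length `n`: `a 0 = 0`, `a (n+1) = n+1`, and
`a` restricted to `{1,…,n}` is a permutation of `{1,…,n}`. -/
def IsJumpSeq (n : ℕ) (a : ℕ → ℕ) : Prop :=
  a 0 = 0 ∧ a (n + 1) = n + 1 ∧ Set.BijOn a (Set.Icc 1 n) (Set.Icc 1 n)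

/-- The absolute-distance cost `⟦ā⟧ = Σ_{i=1}^{n+1} (|a_i - a_{i-1}| - 1)`. -/
def absCost (n : ℕ) (a : ℕ → ℕ) : ℕ :=
  ∑ i ∈ Finset.range (n + 1), (((a (i + 1) : ℤ) - (a i : ℤ)).natAbs - 1)

/-- The maximum-jump cost `max_{i=1}^{n+1} (|a_i - a_{i-1}| - 1)`. -/
def maxCost (n : ℕ) (a : ℕ → ℕ) : ℕ :=
  (Finset.range (n + 1)).sup (fun i => ((a (i + 1) : ℤ) - (a i : ℤ)).natAbs - 1)

/-- The word `w_ā = w_{a_1} ⋯ w_{a_n}` (1-based indexing into `w`). -/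
def applyJump {α : Type*} [Inhabited α] (a : ℕ → ℕ) (w : List α) : List α :=
  (List.range w.length).map (fun i => w.getD (a (i + 1) - 1) default)

/-- `i` is a turning index of the jump sequence `a`. -/
def IsTurn (a : ℕ → ℕ) (i : ℕ) : Prop :=
  (a i > a (i - 1) ∧ a i > a (i + 1)) ∨ (a i < a (i - 1) ∧ a i < a (i + 1))

/-- The number of turning indices of `a` (among `1,…,n`). -/
noncomputable def turnCount (n : ℕ) (a : ℕ → ℕ) : ℕ :=
  ((Finset.Icc 1 n).filter (fun i => IsTurn a i)).card

/-- Hamming distance between two (equal-length) words. -/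
noncomputable def hamming {α : Type*} [Inhabited α] (w w' : List α) : ℕ :=
  ((Finset.range w.length).filter (fun i => w.getD i default ≠ w'.getD i default)).card

/-- The language `(ab)*` over `Fin 2` (`a = 0`, `b = 1`). -/
def LangABstar : Language (Fin 2) :=
  {w | ∃ m : ℕ, w = (List.replicate m ([0, 1] : List (Fin 2))).flatten}

def wrd (n : ℕ) : List (Fin 2) := List.replicate n (1 : Fin 2) ++ List.replicate n (0 : Fin 2)

lemma wrd_length (n : ℕ) : (wrd n).length = 2 * n := by simp [wrd]; omega

lemma wrd_getD (n j : ℕ) : (wrd n).getD j default = if j < n then 1 else 0 := by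
  unfold wrd
  by_cases h : j < n
  · rw [if_pos h, List.getD_append _ _ _ _ (by simpa using h),
      List.getD_eq_getElem _ _ (by simpa using h)]
    simp
  · rw [if_neg h]
    by_cases h2 : j < 2 * n
    · rw [List.getD_eq_getElem _ _ (by simp; omega)]
      rw [List.getElem_append_right (by simpa using h)]
      simp
    · rw [List.getD_eq_default _ _ (by simp; omega)]
      rfl

def alt (i : ℕ) : Fin 2 := if Even i then 0 else 1

lemma alt_of_even (i : ℕ) (h : i % 2 = 0) : alt i = 0 := by
  simp [alt, Nat.even_iff, h]

lemma alt_of_odd (i : ℕ) (h : i % 2 = 1) : alt i = 1 := by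
  simp [alt, Nat.even_iff, h]

lemma flatten_replicate (m : ℕ) :
    (List.replicate m ([0, 1] : List (Fin 2))).flatten = (List.range (2 * m)).map alt := by
  induction m with
  | zero => simp
  | succ m ih =>
    rw [List.replicate_succ', List.flatten_append, ih,
      show 2 * (m + 1) = (2 * m + 1) + 1 by ring, List.range_succ, List.range_succ,
      List.map_append, List.map_append]
    simp [alt, Nat.even_add_one, Nat.even_iff, Nat.mul_mod_right]

lemma getD_map_range (f : ℕ → Fin 2) (N i : ℕ) (h : i < N) :
    ((List.range N).map f).getD i default = f i := by
  rw [List.getD_eq_getElem _ _ (by simpa using h)]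
  simp

lemma applyJump_wrd (n : ℕ) (a : ℕ → ℕ) :
    applyJump a (wrd n) =
      (List.range (2 * n)).map (fun i => (wrd n).getD (a (i + 1) - 1) default) := by
  rw [applyJump, wrd_length]

def exSeq (n : ℕ) : ℕ → ℕ := fun k =>
  if k = 0 then 0 else if k ≤ 2 * n then (if k % 2 = 1 then n + (k + 1) / 2 else k / 2) else k

lemma exSeq_odd (n k : ℕ) (h1 : 1 ≤ k) (h2 : k ≤ 2 * n) (h3 : k % 2 = 1) :
    exSeq n k = n + (k + 1) / 2 := by
  unfold exSeq
  rw [if_neg (show ¬ k = 0 by omega), if_pos h2, if_pos h3]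

lemma exSeq_even (n k : ℕ) (h1 : 1 ≤ k) (h2 : k ≤ 2 * n) (h3 : k % 2 = 0) :
    exSeq n k = k / 2 := by
  unfold exSeq
  rw [if_neg (show ¬ k = 0 by omega), if_pos h2, if_neg (show ¬ k % 2 = 1 by omega)]

lemma exSeq_jump (n : ℕ) : IsJumpSeq (2 * n) (exSeq n) := by
  refine ⟨by simp [exSeq], ?_, ?_, ?_, ?_⟩
  · unfold exSeq
    rw [if_neg (show ¬ 2 * n + 1 = 0 by omega), if_neg (show ¬ 2 * n + 1 ≤ 2 * n by omega)]
  · -- MapsTo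
    intro k hk
    rw [Set.mem_Icc] at *
    simp only [exSeq, if_neg (by omega : ¬ k = 0), if_pos hk.2]
    split <;> omega
  · -- InjOn
    intro x hx y hy h
    rw [Set.mem_Icc] at hx hy
    simp only [exSeq, if_neg (by omega : ¬ x = 0), if_pos hx.2,
      if_neg (by omega : ¬ y = 0), if_pos hy.2] at h
    split_ifs at h <;> omega
  · -- SurjOn
    intro y hy
    rw [Set.mem_Icc] at hy
    by_cases h : y ≤ n
    · refine ⟨2 * y, Set.mem_Icc.mpr ⟨by omega, by omega⟩, ?_⟩
      rw [exSeq_even n (2 * y) (by omega) (by omega) (by omega)]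
      omega
    · refine ⟨2 * y - 2 * n - 1, Set.mem_Icc.mpr ⟨by omega, by omega⟩, ?_⟩
      rw [exSeq_odd n _ (by omega) (by omega) (by omega)]
      omega

/-- for `w = bⁿaⁿ`, every jump sequence accepting into `(ab)*` sends
odd `i ≤ 2n` into `{n+1,…,2n}` and even `i ≤ 2n` into `{1,…,n}`, every `1 ≤ i ≤ 2n`
is a turning index, and the number of turning indices equals `2n`; moreover an
accepting jump sequence exists, so the minimum is exactly `2n`. -/
theorem abstar_rev_exact (n : ℕ) :
    (∀ a : ℕ → ℕ, IsJumpSeq (2 * n) a →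
      applyJump a (List.replicate n (1 : Fin 2) ++ List.replicate n (0 : Fin 2))
        ∈ LangABstar →
      (∀ i, 1 ≤ i → i ≤ 2 * n →
        (Odd i → n + 1 ≤ a i ∧ a i ≤ 2 * n) ∧
        (Even i → 1 ≤ a i ∧ a i ≤ n) ∧ IsTurn a i) ∧
      turnCount (2 * n) a = 2 * n) ∧
    (∃ a : ℕ → ℕ, IsJumpSeq (2 * n) a ∧
      applyJump a (List.replicate n (1 : Fin 2) ++ List.replicate n (0 : Fin 2))
        ∈ LangABstar ∧ turnCount (2 * n) a = 2 * n) := by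
  have main : ∀ a : ℕ → ℕ, IsJumpSeq (2 * n) a →
      applyJump a (List.replicate n (1 : Fin 2) ++ List.replicate n (0 : Fin 2))
        ∈ LangABstar →
      (∀ i, 1 ≤ i → i ≤ 2 * n →
        (Odd i → n + 1 ≤ a i ∧ a i ≤ 2 * n) ∧
        (Even i → 1 ≤ a i ∧ a i ≤ n) ∧ IsTurn a i) ∧
      turnCount (2 * n) a = 2 * n := by
    intro a ha hmem
    obtain ⟨ha0, haN, hbij⟩ := ha
    obtain ⟨m, hm⟩ := hmem
    change applyJump a (wrd n) = _ at hm
    rw [flatten_replicate] at hm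
    have hmn : m = n := by
      have hl := congrArg List.length hm
      rw [applyJump_wrd] at hl
      simp at hl
      omega
    rw [hmn] at hm
    have letter : ∀ i, i < 2 * n → (wrd n).getD (a (i + 1) - 1) default = alt i := by
      intro i hi
      have e : ((List.range (2 * n)).map
          (fun i => (wrd n).getD (a (i + 1) - 1) default)).getD i default
          = ((List.range (2 * n)).map alt).getD i default := by
        rw [← applyJump_wrd, hm]
      rwa [getD_map_range _ _ _ hi, getD_map_range _ _ _ hi] at e
    have key : ∀ k, 1 ≤ k → k ≤ 2 * n →
        (k % 2 = 1 → n + 1 ≤ a k ∧ a k ≤ 2 * n) ∧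
        (k % 2 = 0 → 1 ≤ a k ∧ a k ≤ n) := by
      intro k h1 h2
      have hk := hbij.mapsTo (Set.mem_Icc.mpr ⟨h1, h2⟩)
      rw [Set.mem_Icc] at hk
      have hl := letter (k - 1) (by omega)
      rw [show k - 1 + 1 = k by omega, wrd_getD] at hl
      constructor
      · intro hodd
        rw [alt_of_even (k - 1) (by omega)] at hl
        by_cases h : a k - 1 < n
        · rw [if_pos h] at hl; exact absurd hl (by decide)
        · omega
      · intro heven
        rw [alt_of_odd (k - 1) (by omega)] at hl
        by_cases h : a k - 1 < n
        · omega
        · rw [if_neg h] at hl; exact absurd hl (by decide)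
    have turn : ∀ i, 1 ≤ i → i ≤ 2 * n → IsTurn a i := by
      intro i h1 h2
      rcases Nat.even_or_odd i with hev | hodd
      · -- i even : local minimum
        have him : i % 2 = 0 := Nat.even_iff.mp hev
        right
        have hi := (key i h1 h2).2 him
        have hprev := ((key (i - 1) (by omega) (by omega)).1 (by omega)).1
        refine ⟨by omega, ?_⟩
        by_cases hlast : i = 2 * n
        · rw [show i + 1 = 2 * n + 1 by omega, haN]; omega
        · have hnext := ((key (i + 1) (by omega) (by omega)).1 (by omega)).1
          omega
      · -- i odd : local maximum
        have him : i % 2 = 1 := Nat.odd_iff.mp hodd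
        left
        have hi := (key i h1 h2).1 him
        have hlt : i < 2 * n := by omega
        have hnext := ((key (i + 1) (by omega) (by omega)).2 (by omega)).2
        refine ⟨?_, by omega⟩
        by_cases h1' : i = 1
        · rw [show i - 1 = 0 by omega, ha0]; omega
        · have hprev := ((key (i - 1) (by omega) (by omega)).2 (by omega)).2
          omega
    refine ⟨fun i h1 h2 => ⟨fun h => (key i h1 h2).1 (Nat.odd_iff.mp h),
      fun h => (key i h1 h2).2 (Nat.even_iff.mp h), turn i h1 h2⟩, ?_⟩
    rw [turnCount, Finset.filter_true_of_mem (fun i hi => by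
      rw [Finset.mem_Icc] at hi; exact turn i hi.1 hi.2), Nat.card_Icc]
    omega
  have hjs := exSeq_jump n
  have hmem : applyJump (exSeq n) (List.replicate n (1 : Fin 2) ++ List.replicate n (0 : Fin 2))
      ∈ LangABstar := by
    refine ⟨n, ?_⟩
    rw [flatten_replicate]
    change applyJump (exSeq n) (wrd n) = _
    rw [applyJump_wrd]
    refine List.map_congr_left ?_
    intro i hi
    rw [List.mem_range] at hi
    rw [wrd_getD]
    rcases Nat.even_or_odd i with hev | hodd
    · have him : i % 2 = 0 := Nat.even_iff.mp hev
      rw [exSeq_odd n (i + 1) (by omega) (by omega) (by omega)]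
      rw [if_neg (by omega), alt_of_even i him]
    · have him : i % 2 = 1 := Nat.odd_iff.mp hodd
      rw [exSeq_even n (i + 1) (by omega) (by omega) (by omega)]
      rw [if_pos (by omega), alt_of_odd i him]
  exact ⟨main, exSeq n, hjs, hmem, (main _ hjs hmem).2⟩
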